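/- In the strong coupling regime, i.e. for 0 < ν < 1 and β > (1 + 3ν)/6, every equilibrium of the two-node coupled system lies on the diagonal x₁ = x₂; hence the system has exactly three equilibria, the synchronized states (−√ν,−√ν), (√ν,√ν) and (1,1). -/
import Mathlib


/-- The single-node vector field `f(x,ν) = -(x-1)(x²-ν)`. -/
noncomputable def f (ν x : ℝ) : ℝ := -((x - 1) * (x ^ 2 - ν))

/-- `(x₁,x₂)` is an equilibrium of the two-node bidirectionally coupled system. -/
def IsEquilibrium (ν β x₁ x₂ : ℝ) : Prop :=
  f ν x₁ + β * (x₂ - x₁) = 0 ∧ f ν x₂ + β * (x₁ - x₂) = 0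

/-- In the strong coupling regime `β > (1 + 3ν)/6` (with `0 < ν < 1`), every
equilibrium of the two-node coupled system is synchronized (`x₁ = x₂`), and the
system has exactly the three equilibria `(-√ν,-√ν)`, `(√ν,√ν)`, `(1,1)`. -/
theorem strong_coupling_synchronized {ν β : ℝ} (hν0 : 0 < ν) (hν1 : ν < 1)
    (hβ : (1 + 3 * ν) / 6 < β) :
    (∀ x₁ x₂ : ℝ, IsEquilibrium ν β x₁ x₂ → x₁ = x₂) ∧
    {p : ℝ × ℝ | IsEquilibrium ν β p.1 p.2} =
      {(-Real.sqrt ν, -Real.sqrt ν), (Real.sqrt ν, Real.sqrt ν), (1, 1)} := by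
  have hs : Real.sqrt ν ^ 2 = ν := Real.sq_sqrt hν0.le
  have key : ∀ x₁ x₂ : ℝ, IsEquilibrium ν β x₁ x₂ → x₁ = x₂ := by
    intro x y ⟨h1, h2⟩
    unfold f at h1 h2
    have hsub : (x - y) * (-(x ^ 2 + x * y + y ^ 2) + (x + y) + ν - 2 * β) = 0 := by
      linear_combination h1 - h2
    have hQ : -(x ^ 2 + x * y + y ^ 2) + (x + y) + ν - 2 * β < 0 := by
      nlinarith [sq_nonneg (x + y - 2 / 3), sq_nonneg (x - y)]
    rcases mul_eq_zero.mp hsub with h | h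
    · linarith [sub_eq_zero.mp h]
    · exact absurd h (ne_of_lt hQ)
  refine ⟨key, ?_⟩
  ext ⟨a, b⟩
  simp only [Set.mem_setOf_eq, Set.mem_insert_iff, Set.mem_singleton_iff, Prod.mk.injEq]
  constructor
  · intro h
    have hab : a = b := key a b h
    subst hab
    obtain ⟨h1, _⟩ := h
    unfold f at h1
    have hf : (a - 1) * (a ^ 2 - ν) = 0 := by linarith [h1]
    rcases mul_eq_zero.mp hf with h | h
    · right; right
      have : a = 1 := by linarith
      exact ⟨this, this⟩
    · have h2 : (a - Real.sqrt ν) * (a + Real.sqrt ν) = 0 := by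
        nlinarith [hs]
      rcases mul_eq_zero.mp h2 with h | h
      · right; left
        have : a = Real.sqrt ν := by linarith
        exact ⟨this, this⟩
      · left
        have : a = -Real.sqrt ν := by linarith
        exact ⟨this, this⟩
  · rintro (⟨h1, h2⟩ | ⟨h1, h2⟩ | ⟨h1, h2⟩) <;> subst h1 <;> subst h2 <;>
      constructor <;> unfold f
    · linear_combination (Real.sqrt ν + 1) * hs
    · linear_combination (Real.sqrt ν + 1) * hs
    · linear_combination (1 - Real.sqrt ν) * hs
    · linear_combination (1 - Real.sqrt ν) * hs
    · ring
    · ring
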